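/- Let (x_j)_{j∈J} be a frame for a finite-dimensional real inner product space H, let λ>0 and α>0. If for every x∈H with ‖x‖≤α the subfamily (x_j)_{j∈J_λ(x)} with J_λ(x)={j∈J : |⟨x,x_j⟩|≤λ} is a frame of H, then for every x∈H with ‖x‖<α the subfamily (x_j)_{j∈J_λ^♯(x)} with J_λ^♯(x)={j∈J : |⟨x,x_j⟩|<λ} is a frame of H. -/

import Mathlib

local notation "⟪" x ", " y "⟫" => @inner ℝ _ _ x y

/-- The saturation function `φ_λ`: `φ_λ(t) = t` if `|t| ≤ λ` and `φ_λ(t) = sign(t)·λ` else. -/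
noncomputable def satur (l t : ℝ) : ℝ := max (-l) (min l t)

theorem closed_unsaturated_frame_implies_open_unsaturated_frame
    {H : Type*} [NormedAddCommGroup H] [InnerProductSpace ℝ H] [FiniteDimensional ℝ H]
    {J : Type*} (xv : J → H) (lam α : ℝ) (hlam : 0 < lam) (hα : 0 < α)
    (hframe : ∃ A B : ℝ, 0 < A ∧ 0 < B ∧ ∀ y : H,
      A * ‖y‖ ^ 2 ≤ ∑' j, ⟪y, xv j⟫ ^ 2 ∧ ∑' j, ⟪y, xv j⟫ ^ 2 ≤ B * ‖y‖ ^ 2)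
    (hyp : ∀ x : H, ‖x‖ ≤ α →
      Submodule.span ℝ (xv '' {j : J | |⟪x, xv j⟫| ≤ lam}) = ⊤) :
    ∀ x : H, ‖x‖ < α →
      Submodule.span ℝ (xv '' {j : J | |⟪x, xv j⟫| < lam}) = ⊤ := by
  intro x hx
  by_cases hx0 : x = 0
  · subst hx0
    have h := hyp 0 (by simpa using hα.le)
    have hset : {j : J | |⟪(0:H), xv j⟫| < lam} = {j : J | |⟪(0:H), xv j⟫| ≤ lam} := by
      ext j; simp [inner_zero_left, hlam, hlam.le]
    rw [hset]; exact h
  · have hxn : 0 < ‖x‖ := norm_pos_iff.mpr hx0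
    set t : ℝ := α / ‖x‖ with ht
    have ht1 : 1 < t := (one_lt_div hxn).mpr hx
    have hnorm : ‖t • x‖ ≤ α := by
      rw [norm_smul, Real.norm_eq_abs, abs_of_pos (lt_trans one_pos ht1)]
      rw [ht, div_mul_cancel₀ _ hxn.ne']
    have h := hyp (t • x) hnorm
    have hsub : {j : J | |⟪t • x, xv j⟫| ≤ lam} ⊆ {j : J | |⟪x, xv j⟫| < lam} := by
      intro j hj
      simp only [Set.mem_setOf_eq, real_inner_smul_left, abs_mul,
        abs_of_pos (lt_trans one_pos ht1)] at hj ⊢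
      rcases eq_or_lt_of_le (abs_nonneg ⟪x, xv j⟫) with h0 | h0
      · rw [← h0]; exact hlam
      · nlinarith
    rw [eq_top_iff, ← h]
    exact Submodule.span_mono (Set.image_mono hsub)
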